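/- Let E, λ ∈ ℝ and let x ∈ ℂ, x ≠ 0, satisfy x + 1/x = E² − iλE − 2. Then 2·(|x| + 1/|x|) = sqrt((E² − 4)² + (λE)²) + sqrt(E⁴ + (λE)²). Consequently, if x₂ is a root of largest modulus of z² − (E² − iλE − 2)z + 1 = 0, then |x₂| = e^{2L(E)}, where L(E) ≥ 0 is defined by 4·cosh(2L(E)) = sqrt((E² − 4)² + (λE)²) + sqrt(E⁴ + (λE)²). -/

import Mathlib

open Real Complex

lemma key14 (x t : ℂ) (hx : x ≠ 0) (h : x + 1/x = t) :
    2 * (‖x‖ + 1 / ‖x‖) = ‖t+2‖ + ‖t-2‖ := by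
  have hx' : ‖x‖ ≠ 0 := by simpa using hx
  have ht : x^2 + 1 = t * x := by field_simp at h; linear_combination h
  have h1 : t + 2 = (x+1)^2 / x := by field_simp; linear_combination -ht
  have h2 : t - 2 = (x-1)^2 / x := by field_simp; linear_combination -ht
  have hs : ‖x+1‖ ^ 2 + ‖x-1‖ ^ 2 = 2 * ‖x‖ ^ 2 + 2 := by
    simp only [Complex.sq_norm, Complex.normSq_apply, Complex.add_re, Complex.add_im,
      Complex.sub_re, Complex.sub_im, Complex.one_re, Complex.one_im]
    ring
  rw [h1, h2, norm_div, norm_div, norm_pow, norm_pow, ← add_div, hs]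
  field_simp

theorem stmt14 (E lam L : ℝ) (hL0 : 0 ≤ L)
    (hL : 4 * Real.cosh (2 * L) =
      Real.sqrt ((E ^ 2 - 4) ^ 2 + (lam * E) ^ 2) + Real.sqrt (E ^ 4 + (lam * E) ^ 2)) :
    (∀ x : ℂ, x ≠ 0 → x + 1 / x = ((E : ℂ) ^ 2 - 2) - (lam : ℂ) * E * Complex.I →
      2 * (‖x‖ + 1 / ‖x‖) =
        Real.sqrt ((E ^ 2 - 4) ^ 2 + (lam * E) ^ 2) + Real.sqrt (E ^ 4 + (lam * E) ^ 2)) ∧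
    (∀ x2 : ℂ,
      x2 ^ 2 - (((E : ℂ) ^ 2 - 2) - (lam : ℂ) * E * Complex.I) * x2 + 1 = 0 →
      (∀ z : ℂ, z ^ 2 - (((E : ℂ) ^ 2 - 2) - (lam : ℂ) * E * Complex.I) * z + 1 = 0 →
        ‖z‖ ≤ ‖x2‖) →
      ‖x2‖ = Real.exp (2 * L)) := by
  set t : ℂ := ((E : ℂ) ^ 2 - 2) - (lam : ℂ) * E * Complex.I with htdef
  have ha : ‖t + 2‖ = Real.sqrt (E ^ 4 + (lam * E) ^ 2) := by
    rw [Complex.norm_def]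
    congr 1
    simp [htdef, Complex.normSq_apply, ← Complex.ofReal_pow]
    ring
  have hb : ‖t - 2‖ = Real.sqrt ((E ^ 2 - 4) ^ 2 + (lam * E) ^ 2) := by
    rw [Complex.norm_def]
    congr 1
    simp [htdef, Complex.normSq_apply, ← Complex.ofReal_pow]
    ring
  have main : ∀ x : ℂ, x ≠ 0 → x + 1 / x = t →
      2 * (‖x‖ + 1 / ‖x‖) =
        Real.sqrt ((E ^ 2 - 4) ^ 2 + (lam * E) ^ 2) + Real.sqrt (E ^ 4 + (lam * E) ^ 2) := by
    intro x hx h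
    rw [key14 x t hx h, ha, hb]
    ring
  refine ⟨main, ?_⟩
  intro x2 hroot hmax
  have hx2 : x2 ≠ 0 := by
    intro h0
    rw [h0] at hroot
    simp at hroot
  have hx22 : x2 ^ 2 ≠ 0 := pow_ne_zero _ hx2
  have hsum : x2 + 1 / x2 = t := by
    rw [← sub_eq_zero]
    have h : (x2 + 1/x2 - t) * x2 = 0 := by field_simp; linear_combination hroot
    exact (mul_eq_zero.mp h).resolve_right hx2
  have hinv : (1/x2) ^ 2 - t * (1/x2) + 1 = 0 := by
    have h : ((1/x2)^2 - t*(1/x2) + 1) * x2^2 = 0 := by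
      field_simp; linear_combination hroot
    exact (mul_eq_zero.mp h).resolve_right hx22
  have hle := hmax (1/x2) hinv
  rw [norm_div, norm_one] at hle
  set r : ℝ := ‖x2‖ with hrdef
  have hr0 : 0 < r := by
    rw [hrdef]
    exact norm_pos_iff.mpr hx2
  have hr1 : 1 ≤ r := by
    have h1 : 1 ≤ r * r := by
      have := (div_le_iff₀ hr0).mp hle
      linarith
    nlinarith
  have heq := main x2 hx2 hsum
  rw [← hL] at heq
  have hcosh : Real.cosh (2*L) = (Real.exp (2*L) + Real.exp (-(2*L))) / 2 := Real.cosh_eq _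
  set s : ℝ := Real.exp (2*L) with hsdef
  have hs1 : 1 ≤ s := Real.one_le_exp (by linarith)
  have hs0 : 0 < s := by linarith
  have hexpneg : Real.exp (-(2*L)) = 1 / s := by
    rw [Real.exp_neg, hsdef, one_div]
  have heq2 : r + 1 / r = s + 1 / s := by
    rw [hcosh, hexpneg] at heq
    linarith
  have hfac : (r - s) * (r * s - 1) = 0 := by
    have h := heq2
    field_simp at h
    nlinarith [h]
  rcases mul_eq_zero.mp hfac with h | h
  · linarith
  · have hrr : r = 1 := by nlinarith
    have hss : s = 1 := by nlinarith
    rw [hrr, hss]
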